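/- For L > 0, the function h(s) = min(-L²s³ + 4s, -Ls² + 4s) is strictly concave on the interval (0, √3/L), and its unique maximizer on this interval is s = √(4/3)/L. -/

import Mathlib

open Set

lemma strictConcaveOn_min {s : Set ℝ} {f g : ℝ → ℝ} (hf : StrictConcaveOn ℝ s f)
    (hg : StrictConcaveOn ℝ s g) : StrictConcaveOn ℝ s (fun x => min (f x) (g x)) := by
  refine ⟨hf.1, fun x hx y hy hxy a b ha hb hab => ?_⟩
  have h1 := hf.2 hx hy hxy ha hb hab
  have h2 := hg.2 hx hy hxy ha hb hab
  simp only [smul_eq_mul] at *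
  refine lt_min ?_ ?_
  · calc a * min (f x) (g x) + b * min (f y) (g y) ≤ a * f x + b * f y := by
          gcongr <;> simp [min_le_left]
      _ < _ := h1
  · calc a * min (f x) (g x) + b * min (f y) (g y) ≤ a * g x + b * g y := by
          gcongr <;> simp [min_le_right]
      _ < _ := h2

lemma strictConcaveOn_neg_smul {s : Set ℝ} {f : ℝ → ℝ} {c : ℝ} (hc : 0 < c)
    (hf : StrictConvexOn ℝ s f) : StrictConcaveOn ℝ s (fun x => -c * f x) := by
  refine ⟨hf.1, fun x hx y hy hxy p q hp hq hpq => ?_⟩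
  have h := hf.2 hx hy hxy hp hq hpq
  simp only [smul_eq_mul] at *
  nlinarith [h]

theorem stmt_11 (L : ℝ) (hL : 0 < L) :
    StrictConcaveOn ℝ (Set.Ioo 0 (Real.sqrt 3 / L))
      (fun s => min (-L ^ 2 * s ^ 3 + 4 * s) (-L * s ^ 2 + 4 * s)) ∧
    ∀ s ∈ Set.Ioo 0 (Real.sqrt 3 / L), s ≠ Real.sqrt (4 / 3) / L →
      min (-L ^ 2 * s ^ 3 + 4 * s) (-L * s ^ 2 + 4 * s) <
        min (-L ^ 2 * (Real.sqrt (4 / 3) / L) ^ 3 + 4 * (Real.sqrt (4 / 3) / L))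
          (-L * (Real.sqrt (4 / 3) / L) ^ 2 + 4 * (Real.sqrt (4 / 3) / L)) := by
  have hsub : Set.Ioo (0:ℝ) (Real.sqrt 3 / L) ⊆ Set.Ici 0 := fun x hx => le_of_lt hx.1
  have hconv : Convex ℝ (Set.Ioo (0:ℝ) (Real.sqrt 3 / L)) := convex_Ioo _ _
  have hcube : StrictConcaveOn ℝ (Set.Ioo (0:ℝ) (Real.sqrt 3 / L))
      (fun s => -L ^ 2 * s ^ 3 + 4 * s) := by
    have h1 : StrictConvexOn ℝ (Set.Ici (0:ℝ)) (fun x : ℝ => x ^ 3) :=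
      strictConvexOn_pow (by norm_num)
    have h2 := strictConcaveOn_neg_smul (c := L ^ 2) (by positivity) h1
    have h3 := (h2.subset hsub hconv).add_concaveOn
      ((concaveOn_id hconv).smul (c := (4:ℝ)) (by norm_num))
    exact h3
  have hquad : StrictConcaveOn ℝ (Set.Ioo (0:ℝ) (Real.sqrt 3 / L))
      (fun s => -L * s ^ 2 + 4 * s) := by
    have h1 : StrictConvexOn ℝ (Set.Ici (0:ℝ)) (fun x : ℝ => x ^ 2) :=
      strictConvexOn_pow (by norm_num)
    have h2 := strictConcaveOn_neg_smul (c := L) hL h1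
    have h3 := (h2.subset hsub hconv).add_concaveOn
      ((concaveOn_id hconv).smul (c := (4:ℝ)) (by norm_num))
    exact h3
  refine ⟨strictConcaveOn_min hcube hquad, ?_⟩
  intro s hs hne
  set a := Real.sqrt (4 / 3) with ha
  have ha2 : a ^ 2 = 4 / 3 := Real.sq_sqrt (by norm_num)
  have hapos : 0 < a := Real.sqrt_pos.mpr (by norm_num)
  have ha1 : 1 < a := by nlinarith
  have hmin : min (-L ^ 2 * (a / L) ^ 3 + 4 * (a / L)) (-L * (a / L) ^ 2 + 4 * (a / L))
      = -L ^ 2 * (a / L) ^ 3 + 4 * (a / L) := by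
    apply min_eq_left
    have e1 : -L ^ 2 * (a / L) ^ 3 = -(a ^ 3) / L := by field_simp
    have e2 : -L * (a / L) ^ 2 = -(a ^ 2) / L := by field_simp
    rw [e1, e2]
    have h3 : -(a ^ 3) / L ≤ -(a ^ 2) / L := by
      apply div_le_div_of_nonneg_right ?_ hL.le
      nlinarith
    linarith
  rw [hmin]
  have hspos := hs.1
  have hdiff : s - a / L ≠ 0 := sub_ne_zero.mpr hne
  have hid : (-L ^ 2 * (a / L) ^ 3 + 4 * (a / L)) - (-L ^ 2 * s ^ 3 + 4 * s)
      = L ^ 2 * ((s - a / L) ^ 2 * (s + 2 * (a / L))) := by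
    have hLa : L * (a / L) = a := by field_simp
    linear_combination (-3 * (a / L - s) * (L * (a / L) + a)) * hLa + (-3 * (a / L - s)) * ha2
  have hfac : 0 < (s - a / L) ^ 2 * (s + 2 * (a / L)) := by
    have : 0 < (s - a / L) ^ 2 := by positivity
    apply mul_pos this
    positivity
  have hkey : -L ^ 2 * s ^ 3 + 4 * s < -L ^ 2 * (a / L) ^ 3 + 4 * (a / L) := by
    nlinarith [mul_pos (show (0:ℝ) < L ^ 2 by positivity) hfac]
  calc min (-L ^ 2 * s ^ 3 + 4 * s) (-L * s ^ 2 + 4 * s) ≤ -L ^ 2 * s ^ 3 + 4 * s :=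
        min_le_left _ _
    _ < _ := hkey
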